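/- arXiv:math/9905059 — 4 statements merged into one kernel-verified Lean document; each statement's English description precedes it below -/
import Mathlib

section
/- In the algebra U_q(iso_2) generated by I₂₁ and T₂ with defining relations I₂₁² T₂ − (q+q⁻¹) I₂₁ T₂ I₂₁ + T₂ I₂₁² = −T₂ and T₂² I₂₁ − (q+q⁻¹) T₂ I₂₁ T₂ + I₂₁ T₂² = 0, and T₁ := q^{1/2} I₂₁ T₂ − q^{−1/2} T₂ I₂₁, the translations q-commute: q^{1/2} T₂ T₁ − q^{−1/2} T₁ T₂ = 0. -/
/-- In `U_q(iso_2)` with `T₁ := q^{1/2} I₂₁ T₂ - q^{-1/2} T₂ I₂₁`, the translations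
q-commute: `q^{1/2} T₂ T₁ - q^{-1/2} T₁ T₂ = 0`.  Here `s = q^{1/2}`, `q = s²`. -/
theorem iso2_translations_qcommute (A : Type*) [Ring A] [Algebra ℂ A]
    (s : ℂ) (hs : s ≠ 0) (I T₂ T₁ : A)
    (h1 : I * I * T₂ - (s ^ 2 + (s ^ 2)⁻¹) • (I * T₂ * I) + T₂ * (I * I) = -T₂)
    (h2 : T₂ * T₂ * I - (s ^ 2 + (s ^ 2)⁻¹) • (T₂ * I * T₂) + I * (T₂ * T₂) = 0)
    (hT₁ : T₁ = s • (I * T₂) - s⁻¹ • (T₂ * I)) :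
    s • (T₂ * T₁) - s⁻¹ • (T₁ * T₂) = 0 := by
  subst hT₁
  have key : s • (T₂ * (s • (I * T₂) - s⁻¹ • (T₂ * I))) -
      s⁻¹ • ((s • (I * T₂) - s⁻¹ • (T₂ * I)) * T₂) =
      (s ^ 2 + (s ^ 2)⁻¹) • (T₂ * I * T₂) - (T₂ * T₂ * I + I * (T₂ * T₂)) := by
    simp only [mul_sub, sub_mul, smul_sub, smul_smul, mul_smul_comm, smul_mul_assoc, mul_assoc]
    match_scalars <;> (field_simp; try ring)
  rw [key, sub_eq_zero, eq_comm, ← sub_eq_zero, ← h2]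
  abel
end

section
/- Conversely, in the associative unital algebra generated by I₂₁, T₁, T₂ with the bilinear relations q^{1/2} I₂₁ T₂ − q^{−1/2} T₂ I₂₁ = T₁, q^{1/2} T₁ I₂₁ − q^{−1/2} I₂₁ T₁ = T₂, and q^{1/2} T₂ T₁ − q^{−1/2} T₁ T₂ = 0, the trilinear relations I₂₁² T₂ − (q+q⁻¹) I₂₁ T₂ I₂₁ + T₂ I₂₁² = −T₂ and T₂² I₂₁ − (q+q⁻¹) T₂ I₂₁ T₂ + I₂₁ T₂² = 0 hold. -/
/-- Conversely, the three bilinear relations of `U_q(iso_2)` imply the two trilinear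
defining relations.  Here `s = q^{1/2}`, `q = s²`. -/
theorem iso2_bilinear_implies_trilinear (A : Type*) [Ring A] [Algebra ℂ A]
    (s : ℂ) (hs : s ≠ 0) (I T₁ T₂ : A)
    (h1 : s • (I * T₂) - s⁻¹ • (T₂ * I) = T₁)
    (h2 : s • (T₁ * I) - s⁻¹ • (I * T₁) = T₂)
    (h3 : s • (T₂ * T₁) - s⁻¹ • (T₁ * T₂) = 0) :
    I * I * T₂ - (s ^ 2 + (s ^ 2)⁻¹) • (I * T₂ * I) + T₂ * (I * I) = -T₂ ∧
    T₂ * T₂ * I - (s ^ 2 + (s ^ 2)⁻¹) • (T₂ * I * T₂) + I * (T₂ * T₂) = 0 := by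
  subst h1
  have e1 : s * s⁻¹ = 1 := mul_inv_cancel₀ hs
  have e2 : s⁻¹ * s = 1 := inv_mul_cancel₀ hs
  have e3 : (s ^ 2)⁻¹ = s⁻¹ * s⁻¹ := by rw [sq, mul_inv]
  simp only [sub_mul, mul_sub, smul_mul_assoc, mul_smul_comm, smul_sub, smul_smul,
    e1, e2, e3, one_smul, sq, mul_assoc] at h2 h3 ⊢
  constructor
  · linear_combination (norm := module) -h2
  · linear_combination (norm := module) -h3
end

section
/- Let q > 0, q ≠ 1. For half-integer m with m ≥ 1/2 and half-integer l with l > m + 1, define on the (2·(l−1/2)-type) nonclassical U'_q(so₃) module with basis |m⟩, m = 1/2, 3/2, ..., l−1, the operators: T(I₂₁)|m⟩ = ε₂ [m]₊ |m⟩, and T(I₃₂)|m⟩ = (1/(q^m − q^{−m}))(([l+m][l−m−1])^{1/2} |m+1⟩ − ([l+m−1][l−m])^{1/2} |m−1⟩) for m > 1/2, while T(I₃₂)|1/2⟩ = (1/(q^{1/2}−q^{−1/2}))(ε₃ [l−1/2] |1/2⟩ + ([l+1/2][l−3/2])^{1/2} |3/2⟩). Then these operators satisfy the defining relations of U'_q(so₃):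 T(I₃₂)T(I₂₁)² − (q+q⁻¹)T(I₂₁)T(I₃₂)T(I₂₁) + T(I₂₁)²T(I₃₂) = −T(I₃₂) and T(I₃₂)²T(I₂₁) − (q+q⁻¹)T(I₃₂)T(I₂₁)T(I₃₂) + T(I₂₁)T(I₃₂)² = −T(I₂₁). -/
set_option maxHeartbeats 1000000

private def Fop (β : ℝ) (c e : ℕ → ℝ) (u : ℕ → ℝ) (k : ℕ) : ℝ :=
  (if k = 0 then β * u 0 else c k * u (k - 1)) - e k * u (k + 1)

private def Gop (a : ℕ → ℝ) (u : ℕ → ℝ) (k : ℕ) : ℝ := a k * u k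

private lemma aux1 (Q β : ℝ) (a c e : ℕ → ℝ)
    (h1 : ∀ k : ℕ, a (k+1)^2 + a k^2 - Q * (a k * a (k+1)) = -1)
    (h0 : (2 - Q) * a 0 ^ 2 = -1)
    (u : ℕ → ℝ) (k : ℕ) :
    Fop β c e (Gop a (Gop a u)) k - Q * Gop a (Fop β c e (Gop a u)) k
      + Gop a (Gop a (Fop β c e u)) k = -Fop β c e u k := by
  rcases k with _ | k
  · simp only [Fop, Gop]
    norm_num
    linear_combination (β * u 0) * h0 - (e 0 * u 1) * h1 0
  · simp only [Fop, Gop, Nat.add_sub_cancel]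
    norm_num
    linear_combination (c (k+1) * u k) * h1 k - (e (k+1) * u (k+2)) * h1 (k+1)

private lemma aux2 (n : ℕ) (Q β : ℝ) (a c e : ℕ → ℝ)
    (hD0 : (2 - Q) * β^2 * a 0 - c 1 * e 0 * (2 * a 0 - Q * a 1) = -a 0)
    (hD1 : a 1 + a 0 - Q * a 0 = 0)
    (hD2 : ∀ k : ℕ, a (k+2) - Q * a (k+1) + a k = 0)
    (hD3 : ∀ k : ℕ, k + 1 < n →
      c (k+1) * e k * (2 * a (k+1) - Q * a k)
        + e (k+1) * c (k+2) * (2 * a (k+1) - Q * a (k+2)) = a (k+1))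
    (u : ℕ → ℝ) (k : ℕ) (hk : k < n) :
    Fop β c e (Fop β c e (Gop a u)) k - Q * Fop β c e (Gop a (Fop β c e u)) k
      + Gop a (Fop β c e (Fop β c e u)) k = -Gop a u k := by
  rcases k with _ | k
  · simp only [Fop, Gop, Nat.add_sub_cancel]
    norm_num
    linear_combination (u 0) * hD0 - (β * e 0 * u 1) * hD1 + (e 0 * e 1 * u 2) * hD2 0
  · rcases k with _ | k
    · simp only [Fop, Gop, Nat.add_sub_cancel]
      norm_num
      linear_combination (c 1 * β * u 0) * hD1 - (u 1) * hD3 0 hk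
        + (e 1 * e 2 * u 3) * hD2 1
    · simp only [Fop, Gop, Nat.add_sub_cancel]
      norm_num [Nat.succ_ne_zero]
      linear_combination (c (k+2) * c (k+1) * u k) * hD2 k - (u (k+2)) * hD3 (k+1) hk
        + (e (k+2) * e (k+3) * u (k+4)) * hD2 (k+2)

private lemma qd_ne (q : ℝ) (hq : 0 < q) (hq1 : q ≠ 1) : q - q⁻¹ ≠ 0 := by
  intro h
  have hq0 : q ≠ 0 := ne_of_gt hq
  have h2 : q * q = 1 := by field_simp at h; nlinarith [h]
  have : (q - 1) * (q + 1) = 0 := by nlinarith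
  rcases mul_eq_zero.1 this with h' | h'
  · exact hq1 (by linarith)
  · nlinarith

private lemma rpow_inj (q : ℝ) (hq : 0 < q) (hq1 : q ≠ 1) {a b : ℝ}
    (h : q ^ a = q ^ b) : a = b := by
  rw [Real.rpow_def_of_pos hq, Real.rpow_def_of_pos hq] at h
  exact mul_left_cancel₀ (Real.log_ne_zero_of_pos_of_ne_one hq hq1) (Real.exp_injective h)

private lemma E_ne (q : ℝ) (hq : 0 < q) (hq1 : q ≠ 1) (m : ℝ) (hm : m ≠ 0) :
    q ^ m - q ^ (-m) ≠ 0 := by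
  intro h
  have := rpow_inj q hq hq1 (sub_eq_zero.1 h)
  apply hm; linarith

private lemma br_nonneg (q : ℝ) (hq : 0 < q) (hq1 : q ≠ 1) (c : ℝ) (hc : 0 ≤ c) :
    0 ≤ (q ^ c - q ^ (-c)) / (q - q⁻¹) := by
  rcases lt_or_gt_of_ne hq1 with h1 | h1
  · rw [div_nonneg_iff]; right
    constructor
    · have : q ^ c ≤ q ^ (-c) := by
        apply Real.rpow_le_rpow_of_exponent_ge hq (le_of_lt h1); linarith
      linarith
    · have : 1 < q⁻¹ := by rw [lt_inv_comm₀] at * <;> simp_all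
      linarith
  · apply div_nonneg
    · have : q ^ (-c) ≤ q ^ c := by
        apply Real.rpow_le_rpow_of_exponent_le (le_of_lt h1); linarith
      linarith
    · have : q⁻¹ < 1 := by rw [inv_lt_one_iff₀]; right; exact h1
      linarith

/-- The nonclassical-type finite dimensional representation `T_{ε,l}` of `U'_q(so₃)`:
on the space with basis `|m⟩`, `m = 1/2, 3/2, ..., l-1` (indexed by `j : Fin n`,
`m = j + 1/2`, `l = n + 1/2`), the operators `A = T(I₂₁)` (diagonal with eigenvalues
`ε₂ [m]₊`) and `B = T(I₃₂)` (shift operator with the displayed coefficients and the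
extra diagonal term `ε₃ [l - 1/2]/(q^{1/2} - q^{-1/2})` at `m = 1/2`) satisfy the two
trilinear defining relations of `U'_q(so₃)`. -/
theorem so3_nonclassical_rep (q : ℝ) (hq : 0 < q) (hq1 : q ≠ 1)
    (ε₂ ε₃ : ℝ) (hε₂ : ε₂ = 1 ∨ ε₂ = -1) (hε₃ : ε₃ = 1 ∨ ε₃ = -1)
    (n : ℕ) (hn : 1 ≤ n) (l : ℝ) (hl : l = n + 1 / 2)
    (br brp : ℝ → ℝ)
    (hbr : ∀ c, br c = (q ^ c - q ^ (-c)) / (q - q⁻¹))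
    (hbrp : ∀ c, brp c = (q ^ c + q ^ (-c)) / (q - q⁻¹))
    (A B : (Fin n → ℝ) → (Fin n → ℝ))
    (hA : ∀ v (j : Fin n), A v j = ε₂ * brp ((j : ℝ) + 1 / 2) * v j)
    (hB : ∀ v (j : Fin n), B v j =
      (if h : 1 ≤ (j : ℕ) then
        Real.sqrt (br (l + ((j : ℝ) - 1 / 2)) * br (l - ((j : ℝ) - 1 / 2) - 1)) /
            (q ^ ((j : ℝ) - 1 / 2) - q ^ (-((j : ℝ) - 1 / 2))) *
          v ⟨(j : ℕ) - 1, by omega⟩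
      else ε₃ * br (l - 1 / 2) / (q ^ ((1:ℝ)/2) - q ^ (-(1:ℝ)/2)) * v j)
      - (if h : (j : ℕ) + 1 < n then
        Real.sqrt (br (l + ((j : ℝ) + 3 / 2) - 1) * br (l - ((j : ℝ) + 3 / 2))) /
            (q ^ ((j : ℝ) + 3 / 2) - q ^ (-((j : ℝ) + 3 / 2))) *
          v ⟨(j : ℕ) + 1, h⟩
      else 0)) :
    (∀ v j, B (A (A v)) j - (q + q⁻¹) * A (B (A v)) j + A (A (B v)) j = -(B v j)) ∧
    (∀ v j, B (B (A v)) j - (q + q⁻¹) * B (A (B v)) j + A (B (B v)) j = -(A v j)) := by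
  have hq0 : q ≠ 0 := ne_of_gt hq
  have hd0 : q - q⁻¹ ≠ 0 := qd_ne q hq hq1
  have hEne : ∀ c : ℝ, c ≠ 0 → q ^ c - q ^ (-c) ≠ 0 := E_ne q hq hq1
  have hbrnn : ∀ c : ℝ, 0 ≤ c → 0 ≤ br c := fun c hc => by
    rw [hbr]; exact br_nonneg q hq hq1 c hc
  have hbr0 : br 0 = 0 := by rw [hbr]; norm_num
  -- the ℕ-indexed coefficient functions
  set Vx : (Fin n → ℝ) → ℕ → ℝ := fun w k => if h : k < n then w ⟨k, h⟩ else 0 with hVx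
  set aa : ℕ → ℝ := fun k => ε₂ * brp ((k : ℝ) + 1 / 2) with haa
  set cc : ℕ → ℝ := fun k =>
    Real.sqrt (br (l + ((k : ℝ) - 1 / 2)) * br (l - ((k : ℝ) - 1 / 2) - 1)) /
      (q ^ ((k : ℝ) - 1 / 2) - q ^ (-((k : ℝ) - 1 / 2))) with hcc
  set ee : ℕ → ℝ := fun k =>
    Real.sqrt (br (l + ((k : ℝ) + 3 / 2) - 1) * br (l - ((k : ℝ) + 3 / 2))) /
      (q ^ ((k : ℝ) + 3 / 2) - q ^ (-((k : ℝ) + 3 / 2))) with hee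
  set ββ : ℝ := ε₃ * br (l - 1 / 2) / (q ^ ((1:ℝ)/2) - q ^ (-(1:ℝ)/2)) with hββ
  -- transfer to ℕ-indexed operators
  have hVA : ∀ w, Vx (A w) = Gop aa (Vx w) := by
    intro w
    funext k
    by_cases hk : k < n
    · simp only [hVx, Gop, haa, hA, dif_pos hk]
    · simp only [hVx, Gop, dif_neg hk, mul_zero]
  have hVB : ∀ w, Vx (B w) = Fop ββ cc ee (Vx w) := by
    intro w
    have hccn : cc n = 0 := by
      simp only [hcc]
      rw [show l - ((n:ℝ) - 1/2) - 1 = 0 by rw [hl]; ring, hbr0, mul_zero,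
        Real.sqrt_zero, zero_div]
    funext k
    by_cases hkn : k < n
    · simp only [hVx, Fop]
      rw [dif_pos hkn, hB w ⟨k, hkn⟩]
      simp only [show ((⟨k, hkn⟩ : Fin n) : ℕ) = k from rfl]
      congr 1
      · rcases k with _ | k'
        · rw [dif_neg (by omega), if_pos rfl, dif_pos hkn]
        · rw [dif_pos (by omega : 1 ≤ k' + 1), if_neg (Nat.succ_ne_zero k'), hcc]
          have hk' : k' + 1 - 1 < n := by omega
          rw [dif_pos hk']
      · simp only [hee]
        by_cases hup : k + 1 < n
        · rw [dif_pos hup, dif_pos hup]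
        · rw [dif_neg hup, dif_neg hup, mul_zero]
    · simp only [hVx, Fop, dif_neg hkn]
      have hk0 : ¬ (k = 0) := by omega
      rw [if_neg hk0]
      have h2 : ¬ (k + 1 < n) := by omega
      rw [dif_neg h2, mul_zero, sub_zero]
      by_cases h3 : k - 1 < n
      · have hkeq : k = n := by omega
        subst hkeq
        rw [hccn, zero_mul]
      · rw [dif_neg h3, mul_zero]
  have keyA : ∀ w (j : Fin n), A w j = Gop aa (Vx w) (j : ℕ) := by
    intro w j
    have : Vx (A w) (j : ℕ) = A w j := by
      simp only [hVx]; rw [dif_pos j.isLt]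
    rw [← this, hVA]
  have keyB : ∀ w (j : Fin n), B w j = Fop ββ cc ee (Vx w) (j : ℕ) := by
    intro w j
    have : Vx (B w) (j : ℕ) = B w j := by
      simp only [hVx]; rw [dif_pos j.isLt]
    rw [← this, hVB]
  -- opaque-denominator helpers
  have hqhalf_ne : q ^ ((1:ℝ)/2) ≠ 0 := (Real.rpow_pos_of_pos hq _).ne'
  -- block scalar identities
  have Wdown : ∀ x : ℝ, 2 * brp (x+1) - (q + q⁻¹) * brp x = q ^ x - q ^ (-x) := by
    intro x
    obtain ⟨d, hdv, hd⟩ : ∃ d : ℝ, d = q - q⁻¹ ∧ d ≠ 0 := ⟨_, rfl, hd0⟩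
    have hX : q ^ x ≠ 0 := (Real.rpow_pos_of_pos hq _).ne'
    simp only [hbrp]
    rw [← hdv]
    field_simp
    rw [hdv]
    simp only [Real.rpow_add hq, Real.rpow_neg hq.le, Real.rpow_one]
    field_simp
    ring
  have Wup : ∀ x : ℝ, 2 * brp x - (q + q⁻¹) * brp (x+1) = -(q ^ (x+1) - q ^ (-(x+1))) := by
    intro x
    obtain ⟨d, hdv, hd⟩ : ∃ d : ℝ, d = q - q⁻¹ ∧ d ≠ 0 := ⟨_, rfl, hd0⟩
    have hX : q ^ x ≠ 0 := (Real.rpow_pos_of_pos hq _).ne'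
    simp only [hbrp]
    rw [← hdv]
    field_simp
    rw [hdv]
    simp only [Real.rpow_add hq, Real.rpow_neg hq.le, Real.rpow_one]
    field_simp
    ring
  have hiii : ∀ x : ℝ, br (l+x) * br (l-x-1) - br (l+x+1) * br (l-x-1-1)
      = (q^(x+1) - q^(-(x+1))) * brp (x+1) := by
    intro x
    obtain ⟨d, hdv, hd⟩ : ∃ d : ℝ, d = q - q⁻¹ ∧ d ≠ 0 := ⟨_, rfl, hd0⟩
    have hX : q ^ x ≠ 0 := (Real.rpow_pos_of_pos hq _).ne'
    have hL : q ^ l ≠ 0 := (Real.rpow_pos_of_pos hq _).ne'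
    simp only [hbr, hbrp]
    rw [← hdv]
    field_simp
    rw [hdv]
    simp only [Real.rpow_add hq, Real.rpow_sub hq, Real.rpow_neg hq.le, Real.rpow_one]
    field_simp
    ring
  have P1pure : ∀ x : ℝ, brp (x+1)^2 + brp x^2 - (q+q⁻¹) * (brp x * brp (x+1)) = -1 := by
    intro x
    obtain ⟨d, hdv, hd⟩ : ∃ d : ℝ, d = q - q⁻¹ ∧ d ≠ 0 := ⟨_, rfl, hd0⟩
    have hX : q ^ x ≠ 0 := (Real.rpow_pos_of_pos hq _).ne'
    simp only [hbrp]
    rw [← hdv]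
    field_simp
    rw [hdv]
    simp only [Real.rpow_add hq, Real.rpow_neg hq.le, Real.rpow_one]
    field_simp
    ring
  have P4pure : ∀ x : ℝ, brp (x+1+1) - (q+q⁻¹) * brp (x+1) + brp x = 0 := by
    intro x
    obtain ⟨d, hdv, hd⟩ : ∃ d : ℝ, d = q - q⁻¹ ∧ d ≠ 0 := ⟨_, rfl, hd0⟩
    have hX : q ^ x ≠ 0 := (Real.rpow_pos_of_pos hq _).ne'
    simp only [hbrp]
    rw [← hdv]
    field_simp
    rw [hdv]
    simp only [Real.rpow_add hq, Real.rpow_neg hq.le, Real.rpow_one]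
    field_simp
    ring
  have hW0 : 2 - (q + q⁻¹) = -(q ^ ((1:ℝ)/2) - q ^ (-((1:ℝ)/2)))^2 := by
    obtain ⟨t, htv, ht⟩ : ∃ t : ℝ, t = q ^ ((1:ℝ)/2) ∧ t ≠ 0 := ⟨_, rfl, hqhalf_ne⟩
    rw [Real.rpow_neg hq.le, ← htv,
      show q = t * t from by rw [htv, ← Real.rpow_add hq]; norm_num [Real.rpow_one]]
    field_simp [ht]
    ring
  have hW7 : (q ^ ((1:ℝ)/2) - q ^ (-((1:ℝ)/2))) * brp (1/2) = 1 := by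
    obtain ⟨d, hdv, hd⟩ : ∃ d : ℝ, d = q - q⁻¹ ∧ d ≠ 0 := ⟨_, rfl, hd0⟩
    obtain ⟨t, htv, ht⟩ : ∃ t : ℝ, t = q ^ ((1:ℝ)/2) ∧ t ≠ 0 := ⟨_, rfl, hqhalf_ne⟩
    simp only [hbrp]
    rw [← hdv, Real.rpow_neg hq.le, ← htv]
    field_simp
    rw [hdv, show q = t * t from by rw [htv, ← Real.rpow_add hq]; norm_num [Real.rpow_one]]
    field_simp [ht]
    ring
  have hD1pure : brp ((1:ℝ)/2+1) + brp ((1:ℝ)/2) - (q+q⁻¹) * brp ((1:ℝ)/2) = 0 := by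
    obtain ⟨d, hdv, hd⟩ : ∃ d : ℝ, d = q - q⁻¹ ∧ d ≠ 0 := ⟨_, rfl, hd0⟩
    obtain ⟨t, htv, ht⟩ : ∃ t : ℝ, t = q ^ ((1:ℝ)/2) ∧ t ≠ 0 := ⟨_, rfl, hqhalf_ne⟩
    simp only [hbrp]
    simp only [Real.rpow_add hq, Real.rpow_neg hq.le, Real.rpow_one]
    rw [← hdv, ← htv]
    field_simp
    rw [hdv, show q = t * t from by rw [htv, ← Real.rpow_add hq]; norm_num [Real.rpow_one]]
    field_simp [ht]
    ring
  have hvi : br (l + 1/2) * br (l - 1/2 - 1) = br (l - 1/2)^2 - 1 := by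
    obtain ⟨d, hdv, hd⟩ : ∃ d : ℝ, d = q - q⁻¹ ∧ d ≠ 0 := ⟨_, rfl, hd0⟩
    obtain ⟨t, htv, ht⟩ : ∃ t : ℝ, t = q ^ ((1:ℝ)/2) ∧ t ≠ 0 := ⟨_, rfl, hqhalf_ne⟩
    obtain ⟨L, hLv, hL⟩ : ∃ L : ℝ, L = q ^ l ∧ L ≠ 0 :=
      ⟨_, rfl, (Real.rpow_pos_of_pos hq _).ne'⟩
    simp only [hbr]
    simp only [Real.rpow_add hq, Real.rpow_sub hq, Real.rpow_neg hq.le, Real.rpow_one]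
    rw [← hdv, ← htv, ← hLv]
    field_simp
    rw [hdv, show q = t * t from by rw [htv, ← Real.rpow_add hq]; norm_num [Real.rpow_one]]
    field_simp [ht]
    ring
  -- scalar identities
  have h1 : ∀ k : ℕ, aa (k+1)^2 + aa k^2 - (q + q⁻¹) * (aa k * aa (k+1)) = -1 := by
    intro k
    simp only [haa]
    push_cast
    rw [show (k:ℝ)+1+1/2 = (k:ℝ)+1/2+1 by ring]
    rcases hε₂ with h|h <;> rw [h] <;> linear_combination P1pure ((k:ℝ)+1/2)
  have h0 : (2 - (q + q⁻¹)) * aa 0 ^ 2 = -1 := by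
    simp only [haa]
    push_cast
    rw [show (0:ℝ)+1/2 = (1:ℝ)/2 by norm_num]
    rcases hε₂ with h|h <;> rw [h] <;>
      linear_combination (brp ((1:ℝ)/2))^2 * hW0 -
        ((q^((1:ℝ)/2) - q^(-((1:ℝ)/2))) * brp ((1:ℝ)/2) + 1) * hW7
  have hD1 : aa 1 + aa 0 - (q + q⁻¹) * aa 0 = 0 := by
    simp only [haa]
    push_cast
    rw [show (1:ℝ)+1/2 = (1:ℝ)/2+1 by norm_num, show (0:ℝ)+1/2 = (1:ℝ)/2 by norm_num]
    rcases hε₂ with h|h <;> rw [h]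
    · linear_combination hD1pure
    · linear_combination -hD1pure
  have hD2 : ∀ k : ℕ, aa (k+2) - (q + q⁻¹) * aa (k+1) + aa k = 0 := by
    intro k
    simp only [haa]
    push_cast
    rw [show (k:ℝ)+2+1/2 = (k:ℝ)+1/2+1+1 by ring, show (k:ℝ)+1+1/2 = (k:ℝ)+1/2+1 by ring]
    rcases hε₂ with h|h <;> rw [h]
    · linear_combination P4pure ((k:ℝ)+1/2)
    · linear_combination -P4pure ((k:ℝ)+1/2)
  have hD0 : (2 - (q + q⁻¹)) * ββ^2 * aa 0 - cc 1 * ee 0 * (2 * aa 0 - (q + q⁻¹) * aa 1)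
      = -aa 0 := by
    simp only [haa, hcc, hee, hββ]
    push_cast
    rw [hW0]
    rw [show l + ((0:ℝ) + 3/2) - 1 = l + 1/2 by ring,
        show l - ((0:ℝ) + 3/2) = l - 1/2 - 1 by ring,
        show l + ((1:ℝ) - 1/2) = l + 1/2 by ring,
        show l - ((1:ℝ) - 1/2) - 1 = l - 1/2 - 1 by ring,
        show (1:ℝ) - 1/2 = (1:ℝ)/2 by norm_num,
        show (0:ℝ) + 3/2 = (1:ℝ)/2 + 1 by norm_num,
        show (0:ℝ) + 1/2 = (1:ℝ)/2 by norm_num,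
        show (1:ℝ) + 1/2 = (1:ℝ)/2 + 1 by norm_num,
        show ((-1:ℝ))/2 = -((1:ℝ)/2) by norm_num]
    obtain ⟨E1, hE1v, hE1⟩ : ∃ x : ℝ, x = q^((1:ℝ)/2) - q^(-((1:ℝ)/2)) ∧ x ≠ 0 :=
      ⟨_, rfl, hEne _ (by positivity)⟩
    obtain ⟨E2, hE2v, hE2⟩ : ∃ x : ℝ, x = q^((1:ℝ)/2+1) - q^(-((1:ℝ)/2+1)) ∧ x ≠ 0 :=
      ⟨_, rfl, hEne _ (by positivity)⟩
    rw [← hE1v, ← hE2v]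
    rw [div_mul_div_comm]
    have hS : 0 ≤ br (l + 1/2) * br (l - 1/2 - 1) := by
      apply mul_nonneg (hbrnn _ (by rw [hl]; positivity))
      apply hbrnn
      rw [hl]
      have : (1:ℝ) ≤ (n:ℝ) := by exact_mod_cast hn
      linarith
    rw [Real.mul_self_sqrt hS]
    rw [show 2 * (ε₂ * brp ((1:ℝ)/2)) - (q+q⁻¹) * (ε₂ * brp ((1:ℝ)/2+1))
        = ε₂ * (2 * brp ((1:ℝ)/2) - (q+q⁻¹) * brp ((1:ℝ)/2+1)) from by ring]
    have hw2 : 2 * brp ((1:ℝ)/2) - (q+q⁻¹) * brp ((1:ℝ)/2+1) = -E2 :=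
      (Wup _).trans (by rw [hE2v])
    rw [hw2, hvi]
    have hw7 : E1 * brp (1/2) = 1 := by rw [hE1v]; exact hW7
    set R := br (l - 1/2) with hR
    set P := brp (1/2) with hP
    rcases hε₃ with h|h <;> rw [h] <;> field_simp <;>
      linear_combination (-(ε₂ * (R^2 - 1))) * hw7
  have hD3 : ∀ k : ℕ, k + 1 < n →
      cc (k+1) * ee k * (2 * aa (k+1) - (q + q⁻¹) * aa k)
        + ee (k+1) * cc (k+2) * (2 * aa (k+1) - (q + q⁻¹) * aa (k+2)) = aa (k+1) := by
    intro k hk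
    have hkr : (k:ℝ) + 1 + 1 ≤ (n:ℝ) := by exact_mod_cast hk
    simp only [haa, hcc, hee]
    push_cast
    rw [show l + ((k:ℝ) + 3/2) - 1 = l + ((k:ℝ) + 1/2) by ring,
        show l - ((k:ℝ) + 3/2) = l - ((k:ℝ) + 1/2) - 1 by ring,
        show l + ((k:ℝ) + 1 + 3/2) - 1 = l + ((k:ℝ) + 1/2) + 1 by ring,
        show l - ((k:ℝ) + 1 + 3/2) = l - ((k:ℝ) + 1/2) - 1 - 1 by ring,
        show l + ((k:ℝ) + 1 - 1/2) = l + ((k:ℝ) + 1/2) by ring,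
        show l - ((k:ℝ) + 1 - 1/2) - 1 = l - ((k:ℝ) + 1/2) - 1 by ring,
        show l + ((k:ℝ) + 2 - 1/2) = l + ((k:ℝ) + 1/2) + 1 by ring,
        show l - ((k:ℝ) + 2 - 1/2) - 1 = l - ((k:ℝ) + 1/2) - 1 - 1 by ring,
        show (k:ℝ) + 1 - 1/2 = (k:ℝ) + 1/2 by ring,
        show (k:ℝ) + 3/2 = (k:ℝ) + 1/2 + 1 by ring,
        show (k:ℝ) + 1 + 3/2 = (k:ℝ) + 1/2 + 1 + 1 by ring,
        show (k:ℝ) + 2 - 1/2 = (k:ℝ) + 1/2 + 1 by ring,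
        show (k:ℝ) + 1 + 1/2 = (k:ℝ) + 1/2 + 1 by ring,
        show (k:ℝ) + 2 + 1/2 = (k:ℝ) + 1/2 + 1 + 1 by ring]
    obtain ⟨E1, hE1v, hE1⟩ : ∃ x : ℝ, x = q^((k:ℝ)+1/2) - q^(-((k:ℝ)+1/2)) ∧ x ≠ 0 :=
      ⟨_, rfl, hEne _ (by positivity)⟩
    obtain ⟨E2, hE2v, hE2⟩ : ∃ x : ℝ, x = q^((k:ℝ)+1/2+1) - q^(-((k:ℝ)+1/2+1)) ∧ x ≠ 0 :=
      ⟨_, rfl, hEne _ (by positivity)⟩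
    obtain ⟨E3, hE3v, hE3⟩ : ∃ x : ℝ, x = q^((k:ℝ)+1/2+1+1) - q^(-((k:ℝ)+1/2+1+1)) ∧ x ≠ 0 :=
      ⟨_, rfl, hEne _ (by positivity)⟩
    rw [← hE1v, ← hE2v, ← hE3v]
    simp only [div_mul_div_comm]
    have hnk : (1:ℝ) ≤ (n:ℝ) := by exact_mod_cast hn
    have hS1 : 0 ≤ br (l + ((k:ℝ)+1/2)) * br (l - ((k:ℝ)+1/2) - 1) := by
      apply mul_nonneg (hbrnn _ (by rw [hl]; positivity))
      apply hbrnn; rw [hl]; linarith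
    have hS2 : 0 ≤ br (l + ((k:ℝ)+1/2) + 1) * br (l - ((k:ℝ)+1/2) - 1 - 1) := by
      apply mul_nonneg (hbrnn _ (by rw [hl]; positivity))
      apply hbrnn; rw [hl]; linarith
    rw [Real.mul_self_sqrt hS1, Real.mul_self_sqrt hS2]
    rw [show 2 * (ε₂ * brp ((k:ℝ)+1/2+1)) - (q+q⁻¹) * (ε₂ * brp ((k:ℝ)+1/2))
        = ε₂ * (2 * brp ((k:ℝ)+1/2+1) - (q+q⁻¹) * brp ((k:ℝ)+1/2)) from by ring,
      show 2 * (ε₂ * brp ((k:ℝ)+1/2+1)) - (q+q⁻¹) * (ε₂ * brp ((k:ℝ)+1/2+1+1))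
        = ε₂ * (2 * brp ((k:ℝ)+1/2+1) - (q+q⁻¹) * brp ((k:ℝ)+1/2+1+1)) from by ring]
    have hw1 : 2 * brp ((k:ℝ)+1/2+1) - (q+q⁻¹) * brp ((k:ℝ)+1/2) = E1 :=
      (Wdown _).trans (by rw [hE1v])
    have hw2 : 2 * brp ((k:ℝ)+1/2+1) - (q+q⁻¹) * brp ((k:ℝ)+1/2+1+1) = -E3 :=
      (Wup _).trans (by rw [hE3v])
    rw [hw1, hw2]
    have h3 := hiii ((k:ℝ)+1/2)
    rw [← hE2v] at h3
    set R1 := br (l + ((k:ℝ)+1/2)) with hR1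
    set R2 := br (l - ((k:ℝ)+1/2) - 1) with hR2
    set R3 := br (l + ((k:ℝ)+1/2) + 1) with hR3
    set R4 := br (l - ((k:ℝ)+1/2) - 1 - 1) with hR4
    set P := brp ((k:ℝ)+1/2+1) with hP
    field_simp
    linear_combination ε₂ * h3
  constructor
  · intro v j
    rw [keyB (A (A v)) j, keyA (B (A v)) j, keyA (A (B v)) j, keyB v j]
    simp only [hVA, hVB]
    exact aux1 (q + q⁻¹) ββ aa cc ee h1 h0 (Vx v) (j : ℕ)
  · intro v j
    rw [keyB (B (A v)) j, keyB (A (B v)) j, keyA (B (B v)) j, keyA v j]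
    simp only [hVA, hVB]
    exact aux2 n (q + q⁻¹) ββ aa cc ee hD0 hD1 hD2 hD3 (Vx v) (j : ℕ) j.isLt
end

section
/- For q > 0, q ≠ 1, the nonclassical one-dimensional representation of U_q(iso_n): sending I_{k+1,k} ↦ ε_{k+1}/(q^{1/2} − q^{−1/2}) for k = 1,...,n−1 and T_n ↦ 0 satisfies all defining relations of U_q(iso_n). -/
/-- The nonclassical one-dimensional representation of `U_q(iso_n)` sending
`I_{k+1,k} ↦ ε_{k+1}/(q^{1/2} - q^{-1/2})` and `T_n ↦ 0` satisfies all the defining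
relations of `U_q(iso_n)`. -/
theorem iso_n_one_dim_nonclassical (q : ℝ) (hq : 0 < q) (hq1 : q ≠ 1)
    (n : ℕ) (ε : ℕ → ℝ) (hε : ∀ k, ε k = 1 ∨ ε k = -1)
    (x : ℕ → ℝ) (hx : ∀ k, x k = ε k / (q ^ ((1:ℝ)/2) - q ^ (-(1:ℝ)/2)))
    (t : ℝ) (ht : t = 0) :
    (∀ k, x (k + 1) * x k ^ 2 - (q + q⁻¹) * (x k * x (k + 1) * x k)
        + x k ^ 2 * x (k + 1) = -x (k + 1)) ∧
    (∀ k, x (k + 1) ^ 2 * x k - (q + q⁻¹) * (x (k + 1) * x k * x (k + 1))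
        + x k * x (k + 1) ^ 2 = -x k) ∧
    (∀ k j, x k * x j = x j * x k) ∧
    (x (n - 1) ^ 2 * t - (q + q⁻¹) * (x (n - 1) * t * x (n - 1))
        + t * x (n - 1) ^ 2 = -t) ∧
    (t ^ 2 * x (n - 1) - (q + q⁻¹) * (t * x (n - 1) * t) + x (n - 1) * t ^ 2 = 0) ∧
    (∀ k, k < n - 1 → x k * t = t * x k) := by
  obtain ⟨s, hs⟩ : ∃ s : ℝ, s = q ^ ((1:ℝ)/2) := ⟨_, rfl⟩
  have hs0 : 0 < s := hs ▸ Real.rpow_pos_of_pos hq _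
  have hs' : s ≠ 0 := ne_of_gt hs0
  have hneg : q ^ (-(1:ℝ)/2) = s⁻¹ := by
    rw [hs, ← Real.rpow_neg hq.le]
    norm_num
  have hq2 : q = s ^ 2 := by
    rw [hs, ← Real.rpow_natCast (q ^ ((1:ℝ)/2)) 2, ← Real.rpow_mul hq.le]
    norm_num
  have hs1 : s ≠ 1 := by
    intro h
    apply hq1
    rw [hq2, h]; norm_num
  have hd' : s * s - 1 ≠ 0 := by
    intro h
    have h2 : (s - 1) * (s + 1) = 0 := by nlinarith
    rcases mul_eq_zero.mp h2 with h3 | h3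
    · exact hs1 (by linarith)
    · nlinarith
  have hx' : ∀ k, x k = ε k * s / (s * s - 1) := by
    intro k
    have h1 : s - s⁻¹ = (s * s - 1) / s := by field_simp
    rw [hx, hneg, ← hs, h1, div_div_eq_mul_div]
  have key : ∀ i j : ℕ, x i * x j ^ 2 - (q + q⁻¹) * (x j * x i * x j)
      + x j ^ 2 * x i = -x i := by
    intro i j
    rw [hx', hx', hq2]
    have hd2 : s ^ 2 - 1 ≠ 0 := by rw [sq]; exact hd'
    rcases hε i with h | h <;> rcases hε j with h' | h' <;> rw [h, h'] <;>
      field_simp <;> ring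
  refine ⟨fun k => key (k + 1) k, fun k => by
      have := key k (k + 1); linarith [this], fun k j => by ring, by simp [ht],
      by simp [ht], fun k _ => by ring⟩
end
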